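/- (Iterative Hard Thresholding error bound.) Let A be an n×N real matrix satisfying aRIP(2k; L₂, U₂) and aRIP(3k; L₃, U₃), let ω ∈ (0,1), and define μ := 2√2·max{ω(1+U₃) − 1, 1 − ω(1−L₃)} and ξ := 2ω√(1+U₂); assume μ < 1. Let x ∈ ℝ^N be k-sparse, let e ∈ ℝⁿ, and set y = Ax + e. Consider any IHT trajectory: x⁰ := 0, and for each l ≥ 1: u^l := x^{l−1} + ω·A*(y − A x^{l−1}); T^l is an index set with |T^l| = k selecting k largest-magnitude entries of u^l; and x^l := (u^l)_{T^l}. Then for every l ≥ 0, ‖x − x^l‖₂ ≤ μ^l·‖x‖₂ + (ξ/(1−μ))·‖e‖₂. -/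

import Mathlib

open Finset Matrix

noncomputable def enormR {α : Type*} [Fintype α] (v : α → ℝ) : ℝ :=
  Real.sqrt (∑ i, (v i) ^ 2)

def restr {N : ℕ} (I : Finset (Fin N)) (x : Fin N → ℝ) : Fin N → ℝ :=
  fun i => if i ∈ I then x i else 0

def sparse {N : ℕ} (k : ℕ) (x : Fin N → ℝ) : Prop :=
  (Finset.univ.filter fun i => x i ≠ 0).card ≤ k

def aRIP {n N : ℕ} (A : Matrix (Fin n) (Fin N) ℝ) (m : ℕ) (L U : ℝ) : Prop :=
  ∀ x : Fin N → ℝ, sparse m x →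
    (1 - L) * enormR x ^ 2 ≤ enormR (A.mulVec x) ^ 2 ∧
      enormR (A.mulVec x) ^ 2 ≤ (1 + U) * enormR x ^ 2

def selects {N : ℕ} (T : Finset (Fin N)) (v : Fin N → ℝ) : Prop :=
  ∀ i ∈ T, ∀ j ∉ T, |v j| ≤ |v i|

def subCols {n N : ℕ} (A : Matrix (Fin n) (Fin N) ℝ) (I : Finset (Fin N)) :
    Matrix (Fin n) I ℝ :=
  fun r c => A r (c : Fin N)

noncomputable def gram {n N : ℕ} (A : Matrix (Fin n) (Fin N) ℝ) (I : Finset (Fin N)) :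
    Matrix I I ℝ :=
  (subCols A I)ᵀ * subCols A I

noncomputable def pinvApply {n N : ℕ} (A : Matrix (Fin n) (Fin N) ℝ) (I : Finset (Fin N))
    (y : Fin n → ℝ) : I → ℝ :=
  ((gram A I)⁻¹ * (subCols A I)ᵀ).mulVec y

noncomputable def pinvVec {n N : ℕ} (A : Matrix (Fin n) (Fin N) ℝ) (I : Finset (Fin N))
    (y : Fin n → ℝ) : Fin N → ℝ :=
  fun i => if h : i ∈ I then pinvApply A I y ⟨i, h⟩ else 0

namespace IHT

variable {α : Type*} [Fintype α]

noncomputable def dot (v w : α → ℝ) : ℝ := ∑ i, v i * w i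

lemma enorm_nonneg (v : α → ℝ) : 0 ≤ enormR v := Real.sqrt_nonneg _

lemma enorm_sq (v : α → ℝ) : enormR v ^ 2 = ∑ i, v i ^ 2 :=
  Real.sq_sqrt (by positivity)

lemma dot_self (v : α → ℝ) : dot v v = enormR v ^ 2 := by
  rw [enorm_sq]; simp [dot, sq]

lemma dot_comm (v w : α → ℝ) : dot v w = dot w v := by
  simp [dot, mul_comm]

lemma enorm_le_enorm_of_sq (v w : α → ℝ) (h : enormR v ^ 2 ≤ enormR w ^ 2) :
    enormR v ≤ enormR w := by
  have h1 := enorm_nonneg v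
  have h2 := enorm_nonneg w
  nlinarith

lemma enorm_eq_zero {v : α → ℝ} (h : enormR v = 0) : v = 0 := by
  have hs : ∑ i, (v i) ^ 2 = 0 := by
    have := enorm_sq v
    rw [h] at this
    simpa using this.symm
  funext i
  have := (Finset.sum_eq_zero_iff_of_nonneg (fun i _ => sq_nonneg (v i))).1 hs i (by simp)
  exact pow_eq_zero_iff (by norm_num) |>.1 this

lemma dot_le (v w : α → ℝ) : dot v w ≤ enormR v * enormR w := by
  have h := Finset.sum_mul_sq_le_sq_mul_sq Finset.univ v w
  calc dot v w ≤ |dot v w| := le_abs_self _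
    _ = Real.sqrt ((dot v w) ^ 2) := (Real.sqrt_sq_eq_abs _).symm
    _ ≤ Real.sqrt ((∑ i, v i ^ 2) * ∑ i, w i ^ 2) := Real.sqrt_le_sqrt (by simpa [dot] using h)
    _ = enormR v * enormR w := by
        rw [Real.sqrt_mul (by positivity)]; rfl

lemma enorm_smul (c : ℝ) (hc : 0 ≤ c) (v : α → ℝ) : enormR (c • v) = c * enormR v := by
  unfold enormR
  have h : ∑ i, (c • v) i ^ 2 = c ^ 2 * ∑ i, v i ^ 2 := by
    rw [Finset.mul_sum]; apply Finset.sum_congr rfl; intros; simp [mul_pow]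
  rw [h, Real.sqrt_mul (sq_nonneg c), Real.sqrt_sq hc]

lemma enorm_add_sq (v w : α → ℝ) :
    enormR (v + w) ^ 2 = enormR v ^ 2 + 2 * dot v w + enormR w ^ 2 := by
  rw [enorm_sq, enorm_sq, enorm_sq, dot, Finset.mul_sum, ← Finset.sum_add_distrib,
    ← Finset.sum_add_distrib]
  apply Finset.sum_congr rfl; intros; simp [Pi.add_apply]; ring

lemma enorm_triangle (v w : α → ℝ) : enormR (v + w) ≤ enormR v + enormR w := by
  have key : enormR (v + w) ^ 2 ≤ (enormR v + enormR w) ^ 2 := by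
    rw [enorm_add_sq]; have := dot_le v w; nlinarith
  have h0 := enorm_nonneg (v + w)
  have h1 := enorm_nonneg v
  have h2 := enorm_nonneg w
  nlinarith


variable {n N k : ℕ}

lemma dot_add_left (a b c : α → ℝ) : dot (a + b) c = dot a c + dot b c := by
  simp [dot, add_mul, Finset.sum_add_distrib]

lemma dot_sub_left (a b c : α → ℝ) : dot (a - b) c = dot a c - dot b c := by
  simp [dot, sub_mul, Finset.sum_sub_distrib]

lemma dot_smul_left (t : ℝ) (a c : α → ℝ) : dot (t • a) c = t * dot a c := by
  simp [dot, Finset.mul_sum, mul_assoc]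

lemma dot_add_right (a b c : α → ℝ) : dot c (a + b) = dot c a + dot c b := by
  rw [dot_comm, dot_add_left, dot_comm a c, dot_comm b c]

lemma dot_sub_right (a b c : α → ℝ) : dot c (a - b) = dot c a - dot c b := by
  rw [dot_comm, dot_sub_left, dot_comm a c, dot_comm b c]

lemma dot_smul_right (t : ℝ) (a c : α → ℝ) : dot c (t • a) = t * dot c a := by
  rw [dot_comm, dot_smul_left, dot_comm a c]

lemma sparse_of_supported {v : Fin N → ℝ} {D : Finset (Fin N)} (hv : ∀ i ∉ D, v i = 0)
    {m : ℕ} (hD : D.card ≤ m) : sparse m v := by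
  refine le_trans (Finset.card_le_card ?_) hD
  intro i hi
  simp only [Finset.mem_filter] at hi
  by_contra h
  exact hi.2 (hv i h)

lemma restr_supported (I : Finset (Fin N)) (v : Fin N → ℝ) : ∀ i ∉ I, restr I v i = 0 := by
  intro i hi; simp [restr, hi]

lemma restr_sub (I : Finset (Fin N)) (a b : Fin N → ℝ) :
    restr I (a - b) = restr I a - restr I b := by
  funext i; by_cases h : i ∈ I <;> simp [restr, h]

lemma restr_add (I : Finset (Fin N)) (a b : Fin N → ℝ) :
    restr I (a + b) = restr I a + restr I b := by
  funext i; by_cases h : i ∈ I <;> simp [restr, h]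

lemma restr_smul (I : Finset (Fin N)) (c : ℝ) (a : Fin N → ℝ) :
    restr I (c • a) = c • restr I a := by
  funext i; by_cases h : i ∈ I <;> simp [restr, h]

lemma enorm_restr_mono {I J : Finset (Fin N)} (hIJ : I ⊆ J) (v : Fin N → ℝ) :
    enormR (restr I v) ≤ enormR (restr J v) := by
  apply Real.sqrt_le_sqrt
  apply Finset.sum_le_sum
  intro i _
  by_cases h : i ∈ I
  · simp [restr, h, hIJ h]
  · simp only [restr, h, if_false]
    split_ifs <;> simp [sq_nonneg]

lemma dot_restr_self (B : Finset (Fin N)) (z : Fin N → ℝ) :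
    dot (restr B z) (restr B z) = dot (restr B z) z := by
  unfold dot
  apply Finset.sum_congr rfl
  intro i _
  by_cases h : i ∈ B <;> simp [restr, h]

lemma adj (A : Matrix (Fin n) (Fin N) ℝ) (e' : Fin n → ℝ) (w : Fin N → ℝ) :
    dot (Aᵀ.mulVec e') w = dot e' (A.mulVec w) := by
  simp only [dot, mulVec, dotProduct, transpose_apply, Finset.sum_mul, Finset.mul_sum]
  rw [Finset.sum_comm]
  apply Finset.sum_congr rfl; intro i _; apply Finset.sum_congr rfl; intro j _; ring

lemma le_of_sq_le_sq {a b : ℝ} (hb : 0 ≤ b) (h : a ^ 2 ≤ b ^ 2) (ha : 0 ≤ a) : a ≤ b := by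
  nlinarith

lemma noise_bound (A : Matrix (Fin n) (Fin N) ℝ) {L₂ U₂ : ℝ} (hU₂0 : 0 ≤ U₂)
    (h₂ : aRIP A (2 * k) L₂ U₂) (B : Finset (Fin N)) (hB : B.card ≤ 2 * k)
    (e' : Fin n → ℝ) :
    enormR (restr B (Aᵀ.mulVec e')) ≤ Real.sqrt (1 + U₂) * enormR e' := by
  set w := restr B (Aᵀ.mulVec e') with hw
  have hsp : sparse (2 * k) w := sparse_of_supported (restr_supported _ _) hB
  have hAw : enormR (A.mulVec w) ≤ Real.sqrt (1 + U₂) * enormR w := by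
    refine le_of_sq_le_sq (mul_nonneg (Real.sqrt_nonneg _) (enorm_nonneg _)) ?_ (enorm_nonneg _)
    rw [mul_pow, Real.sq_sqrt (by linarith)]
    exact (h₂ w hsp).2
  have h1 : enormR w ^ 2 = dot (A.mulVec w) e' := by
    rw [← dot_self, dot_restr_self, ← hw]
    rw [dot_comm, adj, dot_comm]
  have h2 : dot (A.mulVec w) e' ≤ enormR (A.mulVec w) * enormR e' := dot_le _ _
  have he := enorm_nonneg e'
  have hwn := enorm_nonneg w
  rcases eq_or_lt_of_le hwn with h0 | h0
  · rw [← h0]; exact mul_nonneg (Real.sqrt_nonneg _) he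
  · have : enormR w ^ 2 ≤ (Real.sqrt (1 + U₂) * enormR e') * enormR w := by
      calc enormR w ^ 2 = dot (A.mulVec w) e' := h1
        _ ≤ enormR (A.mulVec w) * enormR e' := h2
        _ ≤ (Real.sqrt (1 + U₂) * enormR w) * enormR e' := by
            apply mul_le_mul_of_nonneg_right hAw he
        _ = (Real.sqrt (1 + U₂) * enormR e') * enormR w := by ring
    rw [sq] at this
    exact le_of_mul_le_mul_right this h0


set_option maxHeartbeats 1000000 in
lemma key_bound (A : Matrix (Fin n) (Fin N) ℝ) {L₃ U₃ ω δ : ℝ} (hω : 0 < ω)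
    (hδ : δ = max (ω * (1 + U₃) - 1) (1 - ω * (1 - L₃))) (hLU : 0 ≤ L₃ + U₃)
    (h₃ : aRIP A (3 * k) L₃ U₃)
    (D : Finset (Fin N)) (hD : D.card ≤ 3 * k) (v : Fin N → ℝ) (hv : ∀ i ∉ D, v i = 0) :
    enormR (restr D (v - ω • Aᵀ.mulVec (A.mulVec v))) ≤ δ * enormR v := by
  have hδ0 : 0 ≤ δ := by
    rw [hδ]
    rcases le_total (ω * (1 + U₃) - 1) (1 - ω * (1 - L₃)) with h | h
    · rw [max_eq_right h]; nlinarith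
    · rw [max_eq_left h]; nlinarith
  -- quadratic form bound
  have Qbound : ∀ a : Fin N → ℝ, (∀ i ∉ D, a i = 0) →
      |dot a a - ω * dot (A.mulVec a) (A.mulVec a)| ≤ δ * enormR a ^ 2 := by
    intro a ha
    obtain ⟨hlo, hhi⟩ := h₃ a (sparse_of_supported ha hD)
    rw [dot_self, dot_self]
    rw [abs_le]
    have hm1 : ω * (1 + U₃) - 1 ≤ δ := hδ ▸ le_max_left _ _
    have hm2 : 1 - ω * (1 - L₃) ≤ δ := hδ ▸ le_max_right _ _
    have hnn : 0 ≤ enormR a ^ 2 := sq_nonneg _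
    constructor
    · nlinarith
    · nlinarith
  set w := v - ω • Aᵀ.mulVec (A.mulVec v) with hwdef
  set z := restr D w with hzdef
  by_cases hv0 : enormR v = 0
  · have hv' : v = 0 := enorm_eq_zero hv0
    have hz' : z = 0 := by
      funext i
      by_cases h : i ∈ D <;> simp [hzdef, restr, hwdef, hv', h, Matrix.mulVec_zero]
    have h00 : enormR (0 : Fin N → ℝ) = 0 := by simp [enormR]
    rw [hz', h00]
    exact mul_nonneg hδ0 (enorm_nonneg v)
  by_cases hz0 : enormR z = 0
  · rw [hz0]
    exact mul_nonneg hδ0 (enorm_nonneg v)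
  have hvpos : 0 < enormR v := lt_of_le_of_ne (enorm_nonneg v) (Ne.symm hv0)
  have hzpos : 0 < enormR z := lt_of_le_of_ne (enorm_nonneg z) (Ne.symm hz0)
  -- the key identity
  have hzsupp : ∀ i ∉ D, z i = 0 := restr_supported _ _
  have hid : enormR z ^ 2 = dot z v - ω * dot (A.mulVec z) (A.mulVec v) := by
    rw [← dot_self]
    rw [hzdef, dot_restr_self, ← hzdef, hwdef]
    rw [dot_sub_right, dot_smul_right]
    congr 1
    congr 1
    rw [dot_comm, adj]
    rw [dot_comm]
  set t := Real.sqrt (enormR v / enormR z) with htdef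
  have htpos : 0 < t := Real.sqrt_pos.2 (div_pos hvpos hzpos)
  have ht2 : t ^ 2 = enormR v / enormR z := Real.sq_sqrt (le_of_lt (div_pos hvpos hzpos))
  set p := t • z + t⁻¹ • v with hpdef
  set q := t • z - t⁻¹ • v with hqdef
  have hpsupp : ∀ i ∉ D, p i = 0 := by
    intro i hi; simp [hpdef, hzsupp i hi, hv i hi]
  have hqsupp : ∀ i ∉ D, q i = 0 := by
    intro i hi; simp [hqdef, hzsupp i hi, hv i hi]
  have hQp := Qbound p hpsupp
  have hQq := Qbound q hqsupp
  have hAp : A.mulVec p = t • A.mulVec z + t⁻¹ • A.mulVec v := by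
    rw [hpdef, Matrix.mulVec_add, Matrix.mulVec_smul, Matrix.mulVec_smul]
  have hAq : A.mulVec q = t • A.mulVec z - t⁻¹ • A.mulVec v := by
    rw [hqdef, Matrix.mulVec_sub, Matrix.mulVec_smul, Matrix.mulVec_smul]
  have htne : t ≠ 0 := ne_of_gt htpos
  have expand : dot z v - ω * dot (A.mulVec z) (A.mulVec v) =
      ((dot p p - ω * dot (A.mulVec p) (A.mulVec p)) -
       (dot q q - ω * dot (A.mulVec q) (A.mulVec q))) / 4 := by
    rw [hAp, hAq, hpdef, hqdef]
    simp only [dot_add_left, dot_add_right, dot_sub_left, dot_sub_right, dot_smul_left,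
      dot_smul_right]
    rw [dot_comm v z, dot_comm (A.mulVec v) (A.mulVec z)]
    field_simp
    ring
  have hpq : enormR p ^ 2 + enormR q ^ 2 = 4 * (enormR v * enormR z) := by
    rw [← dot_self, ← dot_self, hpdef, hqdef]
    simp only [dot_add_left, dot_add_right, dot_sub_left, dot_sub_right, dot_smul_left,
      dot_smul_right]
    rw [dot_self z, dot_self v]
    have h1 : t * (t * enormR z ^ 2) = enormR v * enormR z := by
      rw [← mul_assoc, ← sq, ht2]
      field_simp
    have h2 : t⁻¹ * (t⁻¹ * enormR v ^ 2) = enormR v * enormR z := by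
      rw [← mul_assoc, ← mul_inv, ← sq, ht2, inv_div]
      field_simp
    linear_combination 2 * h1 + 2 * h2
  have final : enormR z ^ 2 ≤ δ * (enormR v * enormR z) := by
    rw [hid, expand]
    have h1 : dot p p - ω * dot (A.mulVec p) (A.mulVec p) ≤ δ * enormR p ^ 2 :=
      le_trans (le_abs_self _) hQp
    have h2 : -(δ * enormR q ^ 2) ≤ dot q q - ω * dot (A.mulVec q) (A.mulVec q) := by
      have := neg_abs_le (dot q q - ω * dot (A.mulVec q) (A.mulVec q))
      linarith [hQq, this]
    have := hpq
    nlinarith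
  rw [sq] at final
  rw [← mul_assoc] at final
  exact le_of_mul_le_mul_right final hzpos


lemma enorm_neg (v : α → ℝ) : enormR (-v) = enormR v := by
  unfold enormR; congr 1; apply Finset.sum_congr rfl; intros; simp

lemma enorm_sub_le (v w : α → ℝ) : enormR (v - w) ≤ enormR v + enormR w := by
  rw [sub_eq_add_neg]
  exact le_trans (enorm_triangle v (-w)) (by rw [enorm_neg])

lemma thresh_bound (S T : Finset (Fin N)) (hS : S.card ≤ k) (hT : T.card = k)
    (u x : Fin N → ℝ) (sel : selects T u) (hx : ∀ i ∉ S, x i = 0) :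
    enormR (restr (S ∪ T) (u - restr T u)) ≤ enormR (restr (S ∪ T) (u - x)) := by
  apply Real.sqrt_le_sqrt
  have hL : ∑ i, (restr (S ∪ T) (u - restr T u) i) ^ 2 = ∑ i ∈ S \ T, u i ^ 2 := by
    rw [← Finset.sum_filter_add_sum_filter_not Finset.univ (fun i => i ∈ S \ T)]
    have e1 : ∑ i ∈ Finset.univ.filter (fun i => i ∈ S \ T),
        (restr (S ∪ T) (u - restr T u) i) ^ 2 = ∑ i ∈ S \ T, u i ^ 2 := by
      rw [Finset.filter_mem_eq_inter, Finset.univ_inter]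
      apply Finset.sum_congr rfl
      intro i hi
      obtain ⟨hiS, hiT⟩ := Finset.mem_sdiff.1 hi
      simp [restr, hiS, hiT]
    have e2 : ∑ i ∈ Finset.univ.filter (fun i => ¬ i ∈ S \ T),
        (restr (S ∪ T) (u - restr T u) i) ^ 2 = 0 := by
      apply Finset.sum_eq_zero
      intro i hi
      have hi' := (Finset.mem_filter.1 hi).2
      rw [Finset.mem_sdiff] at hi'
      push_neg at hi'
      by_cases hiT : i ∈ T
      · simp [restr, hiT, Finset.mem_union]
      · have hiS : i ∉ S := fun h => hiT (hi' h)
        have : i ∉ S ∪ T := by simp [Finset.mem_union, hiS, hiT]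
        simp [restr, this]
    rw [e1, e2]; ring
  have hR : ∑ i ∈ T \ S, u i ^ 2 ≤ ∑ i, (restr (S ∪ T) (u - x) i) ^ 2 := by
    rw [← Finset.sum_filter_add_sum_filter_not Finset.univ (fun i => i ∈ T \ S)]
    have e1 : ∑ i ∈ Finset.univ.filter (fun i => i ∈ T \ S),
        (restr (S ∪ T) (u - x) i) ^ 2 = ∑ i ∈ T \ S, u i ^ 2 := by
      rw [Finset.filter_mem_eq_inter, Finset.univ_inter]
      apply Finset.sum_congr rfl
      intro i hi
      obtain ⟨hiT, hiS⟩ := Finset.mem_sdiff.1 hi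
      have : i ∈ S ∪ T := Finset.mem_union_right _ hiT
      simp [restr, this, hx i hiS]
    rw [e1]
    have : 0 ≤ ∑ i ∈ Finset.univ.filter (fun i => ¬ i ∈ T \ S),
        (restr (S ∪ T) (u - x) i) ^ 2 :=
      Finset.sum_nonneg fun i _ => sq_nonneg _
    linarith
  rw [hL]
  refine le_trans ?_ hR
  -- counting argument
  have hcard : (S \ T).card ≤ (T \ S).card := by
    have h1 := Finset.card_sdiff_add_card_inter S T
    have h2 := Finset.card_sdiff_add_card_inter T S
    rw [Finset.inter_comm] at h2
    omega
  by_cases hTS : (T \ S).Nonempty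
  · set m := (T \ S).inf' hTS (fun j => u j ^ 2) with hmdef
    have hm_le : ∀ j ∈ T \ S, m ≤ u j ^ 2 := fun j hj => Finset.inf'_le _ hj
    have hm0 : 0 ≤ m := Finset.le_inf' hTS _ fun j _ => sq_nonneg _
    have hub : ∀ i ∈ S \ T, u i ^ 2 ≤ m := by
      intro i hi
      apply Finset.le_inf'
      intro j hj
      have hiT : i ∉ T := (Finset.mem_sdiff.1 hi).2
      have hjT : j ∈ T := (Finset.mem_sdiff.1 hj).1
      have habs := sel j hjT i hiT
      calc u i ^ 2 = |u i| ^ 2 := (sq_abs _).symm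
        _ ≤ |u j| ^ 2 := by apply pow_le_pow_left₀ (abs_nonneg _) habs
        _ = u j ^ 2 := sq_abs _
    calc ∑ i ∈ S \ T, u i ^ 2 ≤ (S \ T).card • m := Finset.sum_le_card_nsmul _ _ _ hub
      _ ≤ (T \ S).card • m := by
          rw [nsmul_eq_mul, nsmul_eq_mul]
          exact mul_le_mul_of_nonneg_right (Nat.cast_le.2 hcard) hm0
      _ ≤ ∑ i ∈ T \ S, u i ^ 2 := Finset.card_nsmul_le_sum _ _ _ hm_le
  · rw [Finset.not_nonempty_iff_eq_empty] at hTS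
    rw [hTS] at hcard
    have hST : S \ T = ∅ := Finset.card_eq_zero.1 (by simpa using hcard)
    rw [hST, hTS]

end IHT

open IHT in
set_option maxHeartbeats 1000000 in
theorem stmt15 {n N k : ℕ} (A : Matrix (Fin n) (Fin N) ℝ)
    (L₂ U₂ L₃ U₃ : ℝ)
    (hL₂0 : 0 ≤ L₂) (hU₂0 : 0 ≤ U₂) (hL₃0 : 0 ≤ L₃) (hU₃0 : 0 ≤ U₃)
    (h₂ : aRIP A (2 * k) L₂ U₂) (h₃ : aRIP A (3 * k) L₃ U₃)
    (ω : ℝ) (hω0 : 0 < ω) (hω1 : ω < 1)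
    (μ ξ : ℝ)
    (hμ : μ = 2 * Real.sqrt 2 * max (ω * (1 + U₃) - 1) (1 - ω * (1 - L₃)))
    (hξ : ξ = 2 * ω * Real.sqrt (1 + U₂))
    (hμ1 : μ < 1)
    (x : Fin N → ℝ) (hx : sparse k x) (e y : Fin n → ℝ)
    (hy : y = fun i => A.mulVec x i + e i)
    (xs u : ℕ → Fin N → ℝ) (Ts : ℕ → Finset (Fin N))
    (hxs0 : xs 0 = 0)
    (hu : ∀ l : ℕ, u (l + 1) =
      fun i => xs l i + ω * Aᵀ.mulVec (fun j => y j - A.mulVec (xs l) j) i)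
    (hTcard : ∀ l : ℕ, (Ts (l + 1)).card = k)
    (hTsel : ∀ l : ℕ, selects (Ts (l + 1)) (u (l + 1)))
    (hxsucc : ∀ l : ℕ, xs (l + 1) = restr (Ts (l + 1)) (u (l + 1))) :
    ∀ l : ℕ, enormR (fun i => x i - xs l i) ≤
      μ ^ l * enormR x + (ξ / (1 - μ)) * enormR e := by
  have hsupp : ∀ l, ∃ C : Finset (Fin N), C.card ≤ k ∧ ∀ i ∉ C, xs l i = 0 := by
    intro l
    cases l with
    | zero => exact ⟨∅, by simp, by simp [hxs0]⟩
    | succ m =>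
        exact ⟨Ts (m + 1), le_of_eq (hTcard m),
          fun i hi => by rw [hxsucc m]; exact restr_supported _ _ i hi⟩
  set S : Finset (Fin N) := Finset.univ.filter (fun i => x i ≠ 0) with hSdef
  have hScard : S.card ≤ k := hx
  have hxS : ∀ i ∉ S, x i = 0 := by
    intro i hi
    by_contra h
    exact hi (by simp [hSdef, h])
  set δ := max (ω * (1 + U₃) - 1) (1 - ω * (1 - L₃)) with hδdef
  have hδ0 : 0 ≤ δ := by
    rcases le_total (ω * (1 + U₃) - 1) (1 - ω * (1 - L₃)) with h | h
    · rw [hδdef, max_eq_right h]; nlinarith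
    · rw [hδdef, max_eq_left h]; nlinarith
  have h2δμ : 2 * δ ≤ μ := by
    rw [hμ]
    have h1 : (1 : ℝ) ≤ Real.sqrt 2 := by
      rw [show (1 : ℝ) = Real.sqrt 1 by simp]
      exact Real.sqrt_le_sqrt (by norm_num)
    nlinarith
  have hμ0 : 0 ≤ μ := by linarith
  have hξ0 : 0 ≤ ξ := by
    rw [hξ]
    have := Real.sqrt_nonneg (1 + U₂)
    nlinarith
  have hμlt : 0 < 1 - μ := by linarith
  -- the recursion step
  have step : ∀ l, enormR (fun i => x i - xs (l + 1) i) ≤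
      μ * enormR (fun i => x i - xs l i) + ξ * enormR e := by
    intro l
    obtain ⟨C, hCcard, hC⟩ := hsupp l
    have hvdef : (fun i => x i - xs l i) = x - xs l := rfl
    set v : Fin N → ℝ := x - xs l with hv
    set T := Ts (l + 1) with hTdef
    set B := S ∪ T with hBdef
    set D := S ∪ C ∪ T with hDdef
    have hBD : B ⊆ D := by
      intro i
      simp only [hBdef, hDdef, Finset.mem_union]
      tauto
    have hDcard : D.card ≤ 3 * k := by
      calc D.card ≤ (S ∪ C).card + T.card := Finset.card_union_le _ _
        _ ≤ (S.card + C.card) + T.card := by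
            have := Finset.card_union_le S C
            omega
        _ ≤ 3 * k := by rw [hTcard l] at *; omega
    have hBcard : B.card ≤ 2 * k := by
      calc B.card ≤ S.card + T.card := Finset.card_union_le _ _
        _ ≤ 2 * k := by rw [hTcard l] at *; omega
    have hvD : ∀ i ∉ D, v i = 0 := by
      intro i hi
      simp only [hDdef, Finset.mem_union, not_or] at hi
      show x i - xs l i = 0
      rw [hxS i hi.1.1, hC i hi.1.2]
      ring
    -- formula for x - u (l+1)
    have hxu : x - u (l + 1) = (v - ω • Aᵀ.mulVec (A.mulVec v)) - ω • Aᵀ.mulVec e := by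
      rw [hu l]
      have hres : (fun j => y j - A.mulVec (xs l) j) = A.mulVec v + e := by
        funext j
        rw [hy]
        show A.mulVec x j + e j - A.mulVec (xs l) j = A.mulVec v j + e j
        rw [hv, Matrix.mulVec_sub]
        show A.mulVec x j + e j - A.mulVec (xs l) j
          = (A.mulVec x j - A.mulVec (xs l) j) + e j
        ring
      rw [hres, Matrix.mulVec_add]
      funext i
      show x i - (xs l i + ω * ((Aᵀ.mulVec (A.mulVec v)) i + (Aᵀ.mulVec e) i))
        = (v i - ω * (Aᵀ.mulVec (A.mulVec v)) i) - ω * (Aᵀ.mulVec e) i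
      have : v i = x i - xs l i := rfl
      rw [this]; ring
    -- error supported in B
    have herr : x - xs (l + 1) = restr B (x - xs (l + 1)) := by
      funext i
      by_cases hiB : i ∈ B
      · simp [restr, hiB]
      · simp only [hBdef, Finset.mem_union, not_or] at hiB
        have h1 : x i = 0 := hxS i hiB.1
        have h2 : xs (l + 1) i = 0 := by
          rw [hxsucc l]
          exact restr_supported _ _ i hiB.2
        simp [restr, hBdef, hiB.1, hiB.2, h1, h2]
    -- split
    have hsplit : restr B (x - xs (l + 1))
        = restr B (x - u (l + 1)) + restr B (u (l + 1) - xs (l + 1)) := by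
      have harg : x - xs (l + 1) = (x - u (l + 1)) + (u (l + 1) - xs (l + 1)) := by
        funext i
        show x i - xs (l + 1) i = (x i - u (l + 1) i) + (u (l + 1) i - xs (l + 1) i)
        ring
      rw [harg, restr_add]
    have hthresh : enormR (restr B (u (l + 1) - xs (l + 1)))
        ≤ enormR (restr B (u (l + 1) - x)) := by
      rw [hxsucc l, hBdef]
      exact thresh_bound S T hScard (hTcard l) (u (l + 1)) x (hTsel l) hxS
    have hflip : enormR (restr B (u (l + 1) - x)) = enormR (restr B (x - u (l + 1))) := by
      have : restr B (u (l + 1) - x) = - restr B (x - u (l + 1)) := by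
        funext i
        by_cases hiB : i ∈ B <;> simp [restr, hiB]
      rw [this, IHT.enorm_neg]
    have hkey : enormR (restr B (x - u (l + 1))) ≤ δ * enormR v + ω * (Real.sqrt (1 + U₂) * enormR e) := by
      rw [hxu, restr_sub, restr_smul]
      refine le_trans (enorm_sub_le _ _) ?_
      have t1 : enormR (restr B (v - ω • Aᵀ.mulVec (A.mulVec v))) ≤ δ * enormR v := by
        refine le_trans (enorm_restr_mono hBD _) ?_
        exact key_bound A hω0 hδdef (by linarith) h₃ D hDcard v hvD
      have t2 : enormR (ω • restr B (Aᵀ.mulVec e)) ≤ ω * (Real.sqrt (1 + U₂) * enormR e) := by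
        rw [IHT.enorm_smul ω (le_of_lt hω0)]
        exact mul_le_mul_of_nonneg_left (noise_bound A hU₂0 h₂ B hBcard e) (le_of_lt hω0)
      linarith
    -- assemble
    have main : enormR (x - xs (l + 1)) ≤ 2 * δ * enormR v + ξ * enormR e := by
      calc enormR (x - xs (l + 1)) = enormR (restr B (x - xs (l + 1))) := by rw [← herr]
        _ ≤ enormR (restr B (x - u (l + 1))) + enormR (restr B (u (l + 1) - xs (l + 1))) := by
            rw [hsplit]; exact enorm_triangle _ _
        _ ≤ 2 * enormR (restr B (x - u (l + 1))) := by
            rw [two_mul]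
            have := hflip ▸ hthresh
            linarith
        _ ≤ 2 * (δ * enormR v + ω * (Real.sqrt (1 + U₂) * enormR e)) := by linarith [hkey]
        _ = 2 * δ * enormR v + ξ * enormR e := by rw [hξ]; ring
    refine le_trans main ?_
    have hvn := enorm_nonneg v
    have : 2 * δ * enormR v ≤ μ * enormR v := mul_le_mul_of_nonneg_right h2δμ hvn
    show 2 * δ * enormR v + ξ * enormR e ≤ μ * enormR v + ξ * enormR e
    linarith
  -- induction
  intro l
  induction l with
  | zero =>
      rw [hxs0]
      have h1 : enormR (fun i => x i - (0 : Fin N → ℝ) i) = enormR x := by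
        congr 1; funext i; simp
      rw [h1, pow_zero, one_mul]
      have : 0 ≤ (ξ / (1 - μ)) * enormR e :=
        mul_nonneg (div_nonneg hξ0 (le_of_lt hμlt)) (enorm_nonneg e)
      linarith
  | succ m ih =>
      calc enormR (fun i => x i - xs (m + 1) i)
          ≤ μ * enormR (fun i => x i - xs m i) + ξ * enormR e := step m
        _ ≤ μ * (μ ^ m * enormR x + (ξ / (1 - μ)) * enormR e) + ξ * enormR e :=
            by have := mul_le_mul_of_nonneg_left ih hμ0; linarith
        _ = μ ^ (m + 1) * enormR x + (μ * (ξ / (1 - μ)) + ξ) * enormR e := by ring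
        _ = μ ^ (m + 1) * enormR x + (ξ / (1 - μ)) * enormR e := by
            congr 2
            field_simp
            ring
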